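/- Let (V,w) be a weighted graph with V partitioned into disjoint parts V_1,…,V_c, let p ∈ [c], and let S ⊆ V with |S∩V_p| = k_p. Let H ⊆ V_p be a set of h vertices with k_p < h ≤ |V_p| such that every vertex of H has weighted degree at least the weighted degree of every vertex of V_p∖H, and suppose (S∩V_p)∖H ≠ ∅. Then there exist vertices i ∈ H∖(S∩V_p) and j ∈ (S∩V_p)∖H such that δ_w((S∖{j})∪{i}) ≥ (1 − 2/(h−k_p))·δ_w(S). (Corollary 2.5.) -/

import Mathlib

open Finset

/-- The cut value of a set `S`: total weight of pairs with exactly one endpoint in `S`. -/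
noncomputable def cutVal {V : Type*} [Fintype V] [DecidableEq V]
    (w : V → V → ℝ) (S : Finset V) : ℝ :=
  ∑ u ∈ S, ∑ v ∈ Sᶜ, w u v

/-- The weighted degree of a vertex `v`. -/
noncomputable def wdeg {V : Type*} [Fintype V] [DecidableEq V]
    (w : V → V → ℝ) (v : V) : ℝ :=
  ∑ u ∈ Finset.univ.erase v, w u v

lemma cutVal_nonneg {V : Type*} [Fintype V] [DecidableEq V] (w : V → V → ℝ)
    (hnonneg : ∀ u v, 0 ≤ w u v) (S : Finset V) : 0 ≤ cutVal w S :=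
  Finset.sum_nonneg fun u _ => Finset.sum_nonneg fun v _ => hnonneg u v

lemma cutVal_insert {V : Type*} [Fintype V] [DecidableEq V] (w : V → V → ℝ)
    (hsymm : ∀ u v, w u v = w v u) {T : Finset V} {x : V} (hx : x ∉ T) :
    cutVal w (insert x T) = cutVal w T + wdeg w x - 2 * ∑ v ∈ T, w x v := by
  have hxc : x ∈ Tᶜ := by simpa using hx
  have h1 : (insert x T)ᶜ = Tᶜ.erase x := by
    ext v; simp [not_or, and_comm]
  rw [cutVal, h1, Finset.sum_insert hx]
  have h2 : ∀ u ∈ T, ∑ v ∈ Tᶜ.erase x, w u v = (∑ v ∈ Tᶜ, w u v) - w u x := fun u hu =>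
    Finset.sum_erase_eq_sub hxc
  rw [Finset.sum_congr rfl h2, Finset.sum_sub_distrib]
  have h3 : Tᶜ.erase x = (Finset.univ.erase x) \ T := by
    ext v; simp [and_comm]
  have hTsub : T ⊆ Finset.univ.erase x := fun v hv =>
    Finset.mem_erase.mpr ⟨fun hvx => hx (hvx ▸ hv), Finset.mem_univ v⟩
  have h4 : ∑ v ∈ Tᶜ.erase x, w x v = wdeg w x - ∑ v ∈ T, w x v := by
    rw [h3, Finset.sum_sdiff_eq_sub hTsub, wdeg]
    congr 1
    exact Finset.sum_congr rfl fun u _ => hsymm x u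
  have h5 : ∑ u ∈ T, w u x = ∑ v ∈ T, w x v :=
    Finset.sum_congr rfl fun u _ => hsymm u x
  rw [h4, h5, cutVal]
  ring

/-- Corollary 2.5: blockwise local exchange. With `V` partitioned into `V_1, …, V_c`,
`p ∈ [c]`, `|S ∩ V_p| = k_p`, and `H ⊆ V_p` a set of `h > k_p` highest-weighted-degree
vertices of `V_p` such that `(S ∩ V_p) \ H ≠ ∅`, some vertex of `(S ∩ V_p) \ H` can be
swapped for a vertex of `H \ (S ∩ V_p)` losing at most a `2/(h - k_p)` fraction of the
cut value. -/
theorem local_exchange_block {V : Type*} [Fintype V] [DecidableEq V]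
    (w : V → V → ℝ) (hsymm : ∀ u v, w u v = w v u) (hnonneg : ∀ u v, 0 ≤ w u v)
    (c : ℕ) (Vb : Fin c → Finset V)
    (hVdisj : ∀ i j, i ≠ j → Disjoint (Vb i) (Vb j))
    (hVcover : ∀ v : V, ∃ i, v ∈ Vb i)
    (p : Fin c) (kp h : ℕ)
    (S : Finset V) (hScard : (S ∩ Vb p).card = kp)
    (H : Finset V) (hHsub : H ⊆ Vb p) (hHcard : H.card = h)
    (hkh : kp < h) (hhV : h ≤ (Vb p).card)
    (hdeg : ∀ u ∈ H, ∀ v ∈ Vb p \ H, wdeg w v ≤ wdeg w u)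
    (hne : ((S ∩ Vb p) \ H).Nonempty) :
    ∃ i ∈ H \ (S ∩ Vb p), ∃ j ∈ (S ∩ Vb p) \ H,
      (1 - 2 / ((h : ℝ) - (kp : ℝ))) * cutVal w S ≤ cutVal w (insert i (S.erase j)) := by
  classical
  obtain ⟨j, hj⟩ := hne
  have hjS : j ∈ S := (Finset.mem_inter.mp (Finset.mem_sdiff.mp hj).1).1
  have hjV : j ∈ Vb p := (Finset.mem_inter.mp (Finset.mem_sdiff.mp hj).1).2
  have hjH : j ∉ H := (Finset.mem_sdiff.mp hj).2
  -- the candidate set A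
  set A := H \ S with hA
  have hAeq : A = H \ (S ∩ Vb p) := by
    ext v
    simp only [hA, Finset.mem_sdiff, Finset.mem_inter]
    constructor
    · rintro ⟨hvH, hvS⟩; exact ⟨hvH, fun hw => hvS hw.1⟩
    · rintro ⟨hvH, hvS⟩; exact ⟨hvH, fun hw => hvS ⟨hw, hHsub hvH⟩⟩
  have hAcard : h - kp ≤ A.card := by
    have h1 : (H ∩ S).card + (H \ S).card = H.card := Finset.card_inter_add_card_sdiff H S
    have h2 : H ∩ S ⊆ S ∩ Vb p := by
      intro v hv
      rw [Finset.mem_inter] at hv ⊢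
      exact ⟨hv.2, hHsub hv.1⟩
    have h3 : (H ∩ S).card ≤ kp := hScard ▸ Finset.card_le_card h2
    show h - kp ≤ (H \ S).card
    omega
  have hApos : 0 < A.card := by omega
  have hAne : A.Nonempty := Finset.card_pos.mp hApos
  -- pick i minimizing f i = ∑ v ∈ S, w i v over A
  obtain ⟨i, hiA, hImin⟩ := Finset.exists_min_image A (fun i => ∑ v ∈ S, w i v) hAne
  have hiH : i ∈ H := (Finset.mem_sdiff.mp hiA).1
  have hiS : i ∉ S := (Finset.mem_sdiff.mp hiA).2
  have hij : i ≠ j := fun e => hiS (e ▸ hjS)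
  -- key averaging bound: ((h:ℝ) - kp) * f i ≤ cutVal w S
  have hCS : cutVal w S = ∑ u ∈ Sᶜ, ∑ v ∈ S, w u v := by
    rw [cutVal, Finset.sum_comm]
    exact Finset.sum_congr rfl fun u _ => Finset.sum_congr rfl fun v _ => hsymm v u
  have hsumA : ∑ u ∈ A, ∑ v ∈ S, w u v ≤ cutVal w S := by
    rw [hCS]
    apply Finset.sum_le_sum_of_subset_of_nonneg
    · intro v hv
      simpa using (Finset.mem_sdiff.mp hv).2
    · intro u _ _
      exact Finset.sum_nonneg fun v _ => hnonneg u v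
  have hfnn : 0 ≤ ∑ v ∈ S, w i v := Finset.sum_nonneg fun v _ => hnonneg i v
  have hkey : ((h : ℝ) - kp) * ∑ v ∈ S, w i v ≤ cutVal w S := by
    have h1 : (A.card : ℝ) * ∑ v ∈ S, w i v ≤ ∑ u ∈ A, ∑ v ∈ S, w u v := by
      have := Finset.card_nsmul_le_sum A (fun u => ∑ v ∈ S, w u v) (∑ v ∈ S, w i v) hImin
      rwa [nsmul_eq_mul] at this
    have h2 : ((h : ℝ) - kp) ≤ (A.card : ℝ) := by
      have := hAcard
      have hk : (kp : ℝ) ≤ (h : ℝ) := by exact_mod_cast hkh.le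
      have : ((h - kp : ℕ) : ℝ) ≤ (A.card : ℝ) := by exact_mod_cast hAcard
      rw [Nat.cast_sub hkh.le] at this
      exact this
    nlinarith [hsumA]
  -- cut value identities
  set T := S.erase j with hT
  have hjT : j ∉ T := Finset.notMem_erase j S
  have hiT : i ∉ T := fun hm => hiS (Finset.mem_of_mem_erase hm)
  have hSins : S = insert j T := (Finset.insert_erase hjS).symm
  have e1 : cutVal w (insert i T) = cutVal w T + wdeg w i - 2 * ∑ v ∈ T, w i v :=
    cutVal_insert w hsymm hiT
  have e2 : cutVal w S = cutVal w T + wdeg w j - 2 * ∑ v ∈ T, w j v := by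
    rw [hSins]; exact cutVal_insert w hsymm hjT
  have hdij : wdeg w j ≤ wdeg w i := hdeg i hiH j (Finset.mem_sdiff.mpr ⟨hjV, hjH⟩)
  have hTj : 0 ≤ ∑ v ∈ T, w j v := Finset.sum_nonneg fun v _ => hnonneg j v
  have hTS : ∑ v ∈ T, w i v ≤ ∑ v ∈ S, w i v := by
    apply Finset.sum_le_sum_of_subset_of_nonneg (Finset.erase_subset j S)
    intro v _ _; exact hnonneg i v
  refine ⟨i, hAeq ▸ hiA, j, hj, ?_⟩
  -- final arithmetic
  have hd : (0 : ℝ) < (h : ℝ) - kp := by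
    have : (kp : ℝ) < (h : ℝ) := by exact_mod_cast hkh
    linarith
  have hfd : ∑ v ∈ S, w i v ≤ cutVal w S / ((h : ℝ) - kp) :=
    (le_div_iff₀ hd).mpr (by linarith [hkey])
  have hexp : (1 - 2 / ((h : ℝ) - kp)) * cutVal w S
      = cutVal w S - 2 * (cutVal w S / ((h : ℝ) - kp)) := by
    field_simp
  rw [hexp, e1]
  linarith
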